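/- The polynomial P(M,N) = -90851035780 - 16374894040M² + 33929984593N² - 272432160√3(10 - 8M + 10M² - 8N - 8MN + 3N²)π + 28828800(689 - 148M + 199M² - 148N - 148MN - 74N²)π² has exactly one critical point in ℝ², and at that critical point N < 0 (in particular the critical point lies outside the region 2 ≤ N ≤ M+1, M ≤ 15). -/

import Mathlib

open Real

private lemma deriv_quad (a b c x : ℝ) :
    deriv (fun x : ℝ => a + b*x + c*x^2) x = b + 2*c*x := by
  have h : HasDerivAt (fun x : ℝ => a + b*x + c*x^2)
      ((0 + b * 1) + c * (↑2 * x ^ (2 - 1))) x :=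
    ((hasDerivAt_const x a).add ((hasDerivAt_id x).const_mul b)).add
      ((hasDerivAt_pow 2 x).const_mul c)
  rw [h.deriv]
  push_cast
  ring

set_option maxHeartbeats 1000000 in
theorem sec3_critical_point :
    let P : ℝ → ℝ → ℝ := fun M N =>
      -90851035780 - 16374894040*M^2 + 33929984593*N^2
        - 272432160*Real.sqrt 3*(10 - 8*M + 10*M^2 - 8*N - 8*M*N + 3*N^2)*π
        + 28828800*(689 - 148*M + 199*M^2 - 148*N - 148*M*N - 74*N^2)*π^2
    let crit : ℝ × ℝ → Prop := fun p =>
      deriv (fun M => P M p.2) p.1 = 0 ∧ deriv (fun N => P p.1 N) p.2 = 0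
    (∃! p : ℝ × ℝ, crit p) ∧ (∀ p : ℝ × ℝ, crit p → p.2 < 0) := by
  intro P crit
  set s : ℝ := Real.sqrt 3 with hs
  have hs2 : s^2 = 3 := Real.sq_sqrt (by norm_num)
  have hs0 : 0 ≤ s := Real.sqrt_nonneg 3
  have hslb : (1.732 : ℝ) < s := by nlinarith
  have hsub : s < 1.7321 := by nlinarith
  have hplb : (3.141592 : ℝ) < π := Real.pi_gt_d6
  have hpub : π < 3.141593 := Real.pi_lt_d6
  -- abbreviations for the linear system coefficients
  set A : ℝ := -32749788080 - 5448643200*s*π + 11473862400*π^2 with hA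
  set B : ℝ := 2179457280*s*π - 4266662400*π^2 with hB
  set D : ℝ := 67859969186 - 1634592960*s*π - 4266662400*π^2 with hD
  -- derivative computations
  have hdM : ∀ M N : ℝ, deriv (fun M => P M N) M = A*M + B*N + B := by
    intro M N
    have heq : (fun M => P M N) =
        (fun M : ℝ => (-90851035780 + 33929984593*N^2
            - 272432160*s*(10 - 8*N + 3*N^2)*π
            + 28828800*(689 - 148*N - 74*N^2)*π^2)
          + ((2179457280 + 2179457280*N)*s*π + (-4266662400 - 4266662400*N)*π^2)*M
          + (-16374894040 - 2724321600*s*π + 5736931200*π^2)*M^2) := by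
      funext x; simp only [P]; ring
    rw [heq, deriv_quad, hA, hB]; ring
  have hdN : ∀ M N : ℝ, deriv (fun N => P M N) N = B*M + D*N + B := by
    intro M N
    have heq : (fun N => P M N) =
        (fun N : ℝ => (-90851035780 - 16374894040*M^2
            - 272432160*s*(10 - 8*M + 10*M^2)*π
            + 28828800*(689 - 148*M + 199*M^2)*π^2)
          + ((2179457280 + 2179457280*M)*s*π + (-4266662400 - 4266662400*M)*π^2)*N
          + (33929984593 - 817296480*s*π - 2133331200*π^2)*N^2) := by
      funext x; simp only [P]; ring
    rw [heq, deriv_quad, hB, hD]; ring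
  have hcrit : ∀ p : ℝ × ℝ, crit p ↔
      (A*p.1 + B*p.2 + B = 0 ∧ B*p.1 + D*p.2 + B = 0) := by
    intro p
    simp only [crit, hdM, hdN]
  -- numeric bounds
  have hsp₁ : s*π < 1.7321*3.141593 := by nlinarith
  have hsp₂ : (1.732:ℝ)*3.141592 < s*π := by nlinarith
  have hp2₁ : π^2 < 3.141593^2 := by nlinarith
  have hp2₂ : (3.141592:ℝ)^2 < π^2 := by nlinarith
  have hA1 : 0 < A := by rw [hA]; nlinarith
  have hA2 : A < 50846000000 := by rw [hA]; nlinarith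
  have hBub : B < -30250000000 := by rw [hB]; nlinarith
  have hD1 : 0 < D := by rw [hD]; nlinarith
  have hD2 : D < 16856000000 := by rw [hD]; nlinarith
  have hdet : A*D - B*B < 0 := by nlinarith
  have hdet0 : A*D - B*B ≠ 0 := ne_of_lt hdet
  constructor
  · -- existence and uniqueness
    refine ⟨(B*(B-D)/(A*D - B*B), B*(B-A)/(A*D - B*B)), ?_, ?_⟩
    · simp only [hcrit]
      constructor
      · rw [mul_div_assoc', mul_div_assoc', ← add_div, div_add' _ _ _ hdet0, div_eq_zero_iff]
        left; ring
      · rw [mul_div_assoc', mul_div_assoc', ← add_div, div_add' _ _ _ hdet0, div_eq_zero_iff]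
        left; ring
    · rintro ⟨M, N⟩ h
      rw [hcrit] at h
      obtain ⟨h1, h2⟩ := h
      simp only at h1 h2
      have hMdet : (A*D - B*B) * M = B*(B-D) := by linear_combination D*h1 - B*h2
      have hNdet : (A*D - B*B) * N = B*(B-A) := by linear_combination A*h2 - B*h1
      have hM : M = B*(B-D)/(A*D - B*B) := by
        rw [eq_div_iff hdet0]; linarith [hMdet]
      have hN : N = B*(B-A)/(A*D - B*B) := by
        rw [eq_div_iff hdet0]; linarith [hNdet]
      exact Prod.ext hM hN
  · rintro ⟨M, N⟩ h
    rw [hcrit] at h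
    obtain ⟨h1, h2⟩ := h
    simp only at h1 h2 ⊢
    have hNdet : (A*D - B*B) * N = B*(B-A) := by linear_combination A*h2 - B*h1
    have hpos : 0 < B*(B-A) := by nlinarith
    by_contra hc
    push_neg at hc
    have : (A*D - B*B) * N ≤ 0 := mul_nonpos_of_nonpos_of_nonneg (le_of_lt hdet) hc
    linarith
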